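/- Let P: C^n → R be a non-constant plurisubharmonic polynomial without pluriharmonic terms, homogeneous of degree 2k, and homogeneous of degree 2d_j > 0 in (z_j, z̄_j) for j = 1,...,l, with 1 ≤ l ≤ n−1 and k − D > 0 where D = d_1+···+d_l. Then, away from the coordinate hyperplanes, P is pluriharmonic along the level sets of G: C^n → C^{n−l}, G(z_1,...,z_n) = z_1^{d_1}···z_l^{d_l}·(z_{l+1}^{k−D},...,z_n^{k−D}). That is, for every z with all coordinates nonzero and every vector V in the kernel of the Jacobian G'(z), the Levi form L(P;z,V) = 0. -/

import Mathlib

open Finset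
open scoped ComplexConjugate

/-- Multi-index power `z^α = ∏ i, z i ^ α i`. -/
noncomputable def mpow {n : ℕ} (z : Fin n → ℂ) (α : Fin n →₀ ℕ) : ℂ :=
  ∏ i, z i ^ α i

/-- Value of the polynomial `P(z) = ∑_{(α,β)∈J} a_{α,β} z^α z̄^β`. -/
noncomputable def pval {n : ℕ} (J : Finset ((Fin n →₀ ℕ) × (Fin n →₀ ℕ)))
    (a : (Fin n →₀ ℕ) × (Fin n →₀ ℕ) → ℂ) (z : Fin n → ℂ) : ℂ :=
  ∑ p ∈ J, a p * mpow z p.1 * conj (mpow z p.2)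

/-- Levi form `L(P; z, V) = ∑_{i,j} (∂²P/∂z_i∂z̄_j)(z) V_i conj(V_j)` of
`P(z) = ∑_{(α,β)∈J} a_{α,β} z^α z̄^β`, computed termwise via
`∂²(z^α z̄^β)/∂z_i∂z̄_j = α_i β_j z^{α-e_i} z̄^{β-e_j}`. -/
noncomputable def leviForm {n : ℕ} (J : Finset ((Fin n →₀ ℕ) × (Fin n →₀ ℕ)))
    (a : (Fin n →₀ ℕ) × (Fin n →₀ ℕ) → ℂ) (z V : Fin n → ℂ) : ℂ :=
  ∑ p ∈ J, a p * ∑ i, ∑ j,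
    (p.1 i : ℂ) * (p.2 j : ℂ) * mpow z (p.1 - Finsupp.single i 1) *
      conj (mpow z (p.2 - Finsupp.single j 1)) * V i * conj (V j)


lemma mpow_mul {n : ℕ} (z u : Fin n → ℂ) (γ : Fin n →₀ ℕ) :
    mpow (fun i => z i * u i) γ = mpow z γ * mpow u γ := by
  simp [mpow, mul_pow, Finset.prod_mul_distrib]

lemma mpow_ne_zero {n : ℕ} (z : Fin n → ℂ) (γ : Fin n →₀ ℕ) (hz : ∀ i, z i ≠ 0) :
    mpow z γ ≠ 0 :=
  Finset.prod_ne_zero_iff.2 fun i _ => pow_ne_zero _ (hz i)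

lemma mpow_sub_single {n : ℕ} (z : Fin n → ℂ) (γ : Fin n →₀ ℕ) (i : Fin n)
    (hz : z i ≠ 0) :
    (γ i : ℂ) * mpow z (γ - Finsupp.single i 1) = (γ i : ℂ) * (z i)⁻¹ * mpow z γ := by
  by_cases h : γ i = 0
  · simp [h]
  · have h1 : 1 ≤ γ i := Nat.one_le_iff_ne_zero.2 h
    have expand : ∀ δ : Fin n →₀ ℕ,
        mpow z δ = z i ^ δ i * ∏ i' ∈ Finset.univ.erase i, z i' ^ δ i' := fun δ =>
      (Finset.mul_prod_erase Finset.univ (fun i' => z i' ^ δ i') (Finset.mem_univ i)).symm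
    have key : mpow z (γ - Finsupp.single i 1) * z i = mpow z γ := by
      rw [expand, expand]
      have hne : ∀ i' ∈ Finset.univ.erase i,
          z i' ^ ((γ - Finsupp.single i 1 : Fin n →₀ ℕ)) i' = z i' ^ γ i' := by
        intro i' hi'
        have : i' ≠ i := Finset.ne_of_mem_erase hi'
        simp [Finsupp.tsub_apply, Finsupp.single_apply, this.symm]
      rw [Finset.prod_congr rfl hne]
      have h2 : ((γ - Finsupp.single i 1 : Fin n →₀ ℕ)) i = γ i - 1 := by
        simp [Finsupp.tsub_apply]
      rw [h2]
      have h3 : z i ^ (γ i - 1) * z i = z i ^ γ i := by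
        conv_rhs => rw [← Nat.sub_add_cancel h1]
        rw [pow_succ]
      rw [mul_right_comm, h3]
    rw [← key]
    field_simp

lemma cancel_aux (c x a : ℂ) (ha : a ≠ 0) : c * a⁻¹ * (x * a) = x * c := by
  field_simp

lemma S_factor {l m : ℕ} (z V : Fin (l + m) → ℂ) (hz : ∀ i, z i ≠ 0)
    (lam : Fin l → ℂ) (t : ℂ)
    (hV1 : ∀ j, V (Fin.castAdd m j) = lam j * z (Fin.castAdd m j))
    (hV2 : ∀ i, V (Fin.natAdd l i) = t * z (Fin.natAdd l i))
    (γ : Fin (l + m) →₀ ℕ) :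
    ∑ i, (γ i : ℂ) * mpow z (γ - Finsupp.single i 1) * V i
      = ((∑ j, lam j * (γ (Fin.castAdd m j) : ℂ))
          + t * ∑ i, (γ (Fin.natAdd l i) : ℂ)) * mpow z γ := by
  have step : ∀ i, (γ i : ℂ) * mpow z (γ - Finsupp.single i 1) * V i
      = ((γ i : ℂ) * (z i)⁻¹ * V i) * mpow z γ := by
    intro i
    rw [mpow_sub_single z γ i (hz i)]
    ring
  rw [Finset.sum_congr rfl fun i _ => step i, ← Finset.sum_mul]
  congr 1
  rw [Fin.sum_univ_add]
  congr 1
  · apply Finset.sum_congr rfl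
    intro j _
    rw [hV1 j]
    exact cancel_aux _ _ _ (hz _)
  · rw [Finset.mul_sum]
    apply Finset.sum_congr rfl
    intro i _
    rw [hV2 i]
    exact cancel_aux _ _ _ (hz _)

lemma levi_kernel_eq {l m : ℕ} (J : Finset ((Fin (l + m) →₀ ℕ) × (Fin (l + m) →₀ ℕ)))
    (a : (Fin (l + m) →₀ ℕ) × (Fin (l + m) →₀ ℕ) → ℂ) (z V : Fin (l + m) → ℂ)
    (hz : ∀ i, z i ≠ 0) (lam : Fin l → ℂ) (t : ℂ)
    (hV1 : ∀ j, V (Fin.castAdd m j) = lam j * z (Fin.castAdd m j))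
    (hV2 : ∀ i, V (Fin.natAdd l i) = t * z (Fin.natAdd l i))
    (hw : ∀ p ∈ J,
      (∑ j, lam j * (p.2 (Fin.castAdd m j) : ℂ)) + t * ∑ i, (p.2 (Fin.natAdd l i) : ℂ)
        = -((∑ j, lam j * (p.1 (Fin.castAdd m j) : ℂ)) + t * ∑ i, (p.1 (Fin.natAdd l i) : ℂ))) :
    leviForm J a z V = -∑ p ∈ J, a p *
      (((∑ j, lam j * (p.1 (Fin.castAdd m j) : ℂ)) + t * ∑ i, (p.1 (Fin.natAdd l i) : ℂ)) *
        conj ((∑ j, lam j * (p.1 (Fin.castAdd m j) : ℂ)) + t * ∑ i, (p.1 (Fin.natAdd l i) : ℂ))) *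
      (mpow z p.1 * conj (mpow z p.2)) := by
  unfold leviForm
  rw [← Finset.sum_neg_distrib]
  apply Finset.sum_congr rfl
  intro p hp
  have hS1 := S_factor z V hz lam t hV1 hV2 p.1
  have hS2 := S_factor z V hz lam t hV1 hV2 p.2
  have hinner : (∑ i, ∑ j,
      (p.1 i : ℂ) * (p.2 j : ℂ) * mpow z (p.1 - Finsupp.single i 1) *
        conj (mpow z (p.2 - Finsupp.single j 1)) * V i * conj (V j))
      = (∑ i, (p.1 i : ℂ) * mpow z (p.1 - Finsupp.single i 1) * V i) *
        conj (∑ j, (p.2 j : ℂ) * mpow z (p.2 - Finsupp.single j 1) * V j) := by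
    rw [map_sum, Finset.sum_mul_sum]
    apply Finset.sum_congr rfl
    intro i _
    apply Finset.sum_congr rfl
    intro j _
    simp only [map_mul, Complex.conj_natCast]
    ring
  rw [hinner, hS1, hS2, hw p hp]
  simp only [map_mul, map_neg]
  ring

lemma levi_conj {n : ℕ} (J : Finset ((Fin n →₀ ℕ) × (Fin n →₀ ℕ)))
    (a : (Fin n →₀ ℕ) × (Fin n →₀ ℕ) → ℂ)
    (hsym : ∀ p ∈ J, (p.2, p.1) ∈ J)
    (hherm : ∀ p : (Fin n →₀ ℕ) × (Fin n →₀ ℕ), a (p.2, p.1) = conj (a p))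
    (z V : Fin n → ℂ) :
    conj (leviForm J a z V) = leviForm J a z V := by
  unfold leviForm
  rw [map_sum]
  refine Finset.sum_nbij' (fun p => (p.2, p.1)) (fun p => (p.2, p.1))
    (fun p hp => hsym p hp) (fun p hp => hsym p hp)
    (fun p _ => rfl) (fun p _ => rfl) ?_
  intro p hp
  rw [map_mul, map_sum, ← hherm p]
  congr 1
  rw [Finset.sum_comm]
  apply Finset.sum_congr rfl
  intro i _
  rw [map_sum]
  apply Finset.sum_congr rfl
  intro j _
  simp only [map_mul, Complex.conj_natCast, Complex.conj_conj]
  ring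
lemma pow_mul_inv_sub_one (a : ℂ) (ha : a ≠ 0) {q : ℕ} (hq : 1 ≤ q) :
    a ^ q * a⁻¹ = a ^ (q - 1) := by
  conv_lhs => rw [← Nat.sub_add_cancel hq, pow_succ]
  rw [mul_assoc, mul_inv_cancel₀ ha, mul_one]

lemma kernel_ratios {l m : ℕ} (k : ℕ) (d : Fin l → ℕ) (hd : ∀ j, 0 < d j)
    (hkD : ∑ j, d j < k)
    (G : (Fin (l + m) → ℂ) → (Fin m → ℂ))
    (hGdef : ∀ z i, G z i =
      (∏ j, z (Fin.castAdd m j) ^ d j) * z (Fin.natAdd l i) ^ (k - ∑ j, d j))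
    (z : Fin (l + m) → ℂ) (hz : ∀ i, z i ≠ 0)
    (V : Fin (l + m) → ℂ) (hker : fderiv ℂ G z V = 0) :
    ∀ i : Fin m,
      (∑ j, (d j : ℂ) * (V (Fin.castAdd m j) * (z (Fin.castAdd m j))⁻¹))
        + ((k - ∑ j, d j : ℕ) : ℂ) * (V (Fin.natAdd l i) * (z (Fin.natAdd l i))⁻¹) = 0 := by
  classical
  set E : ℕ := k - ∑ j, d j with hE
  have hE1 : 1 ≤ E := by omega
  set Pr : Fin (l + m) → ((Fin (l + m) → ℂ) →L[ℂ] ℂ) :=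
    fun i0 => ContinuousLinearMap.proj i0 with hPr
  set L : Fin m → ((Fin (l + m) → ℂ) →L[ℂ] ℂ) := fun i =>
    (∏ j, z (Fin.castAdd m j) ^ d j) •
        (((E : ℂ) * z (Fin.natAdd l i) ^ (E - 1)) • Pr (Fin.natAdd l i))
      + (z (Fin.natAdd l i) ^ E) •
        (∑ j, (∏ j' ∈ Finset.univ.erase j, z (Fin.castAdd m j') ^ d j') •
          (((d j : ℂ) * z (Fin.castAdd m j) ^ (d j - 1)) • Pr (Fin.castAdd m j))) with hL
  have hpow : ∀ (i0 : Fin (l + m)) (q : ℕ),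
      HasFDerivAt (fun w : Fin (l + m) → ℂ => w i0 ^ q)
        (((q : ℂ) * z i0 ^ (q - 1)) • Pr i0) z := by
    intro i0 q
    have h0 : HasFDerivAt (fun w : Fin (l + m) → ℂ => w i0) (Pr i0) z :=
      hasFDerivAt_apply i0 z
    exact (hasDerivAt_pow q (z i0)).comp_hasFDerivAt z h0
  have hprod : HasFDerivAt (fun w : Fin (l + m) → ℂ => ∏ j, w (Fin.castAdd m j) ^ d j)
      (∑ j, (∏ j' ∈ Finset.univ.erase j, z (Fin.castAdd m j') ^ d j') •
        (((d j : ℂ) * z (Fin.castAdd m j) ^ (d j - 1)) • Pr (Fin.castAdd m j))) z :=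
    HasFDerivAt.finset_prod (fun j _ => hpow (Fin.castAdd m j) (d j))
  have hcomp : ∀ i : Fin m, HasFDerivAt (fun w : Fin (l + m) → ℂ =>
      (∏ j, w (Fin.castAdd m j) ^ d j) * w (Fin.natAdd l i) ^ E) (L i) z := by
    intro i
    exact hprod.mul (hpow (Fin.natAdd l i) E)
  have hGfun : G = fun w i => (∏ j, w (Fin.castAdd m j) ^ d j) * w (Fin.natAdd l i) ^ E :=
    funext fun w => funext fun i => hGdef w i
  have hG : HasFDerivAt G (ContinuousLinearMap.pi L) z := by
    rw [hGfun]
    exact hasFDerivAt_pi.2 hcomp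
  rw [hG.fderiv] at hker
  intro i
  have h0 : L i V = 0 := by
    have := congrFun hker i
    simpa using this
  rw [hL] at h0
  simp only [ContinuousLinearMap.add_apply, ContinuousLinearMap.smul_apply,
    ContinuousLinearMap.sum_apply, hPr, ContinuousLinearMap.proj_apply, smul_eq_mul] at h0
  set P : ℂ := ∏ j, z (Fin.castAdd m j) ^ d j with hPdef
  have hPne : P ≠ 0 := Finset.prod_ne_zero_iff.2 fun j _ => pow_ne_zero _ (hz _)
  have hzE : z (Fin.natAdd l i) ^ E ≠ 0 := pow_ne_zero _ (hz _)
  have key : P * z (Fin.natAdd l i) ^ E *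
      ((∑ j, (d j : ℂ) * (V (Fin.castAdd m j) * (z (Fin.castAdd m j))⁻¹))
        + (E : ℂ) * (V (Fin.natAdd l i) * (z (Fin.natAdd l i))⁻¹))
      = P * ((E : ℂ) * z (Fin.natAdd l i) ^ (E - 1) * V (Fin.natAdd l i))
        + z (Fin.natAdd l i) ^ E *
          ∑ x, (∏ j ∈ Finset.univ.erase x, z (Fin.castAdd m j) ^ d j) *
            ((d x : ℂ) * z (Fin.castAdd m x) ^ (d x - 1) * V (Fin.castAdd m x)) := by
    rw [mul_add, add_comm]
    congr 1
    · have hc := pow_mul_inv_sub_one (z (Fin.natAdd l i)) (hz _) hE1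
      rw [← hc]
      ring
    · rw [Finset.mul_sum, Finset.mul_sum]
      apply Finset.sum_congr rfl
      intro j _
      have hPj : P = z (Fin.castAdd m j) ^ d j *
          ∏ j' ∈ Finset.univ.erase j, z (Fin.castAdd m j') ^ d j' :=
        (Finset.mul_prod_erase _ _ (Finset.mem_univ j)).symm
      have hc := pow_mul_inv_sub_one (z (Fin.castAdd m j)) (hz _) (hd j)
      rw [hPj, ← hc]
      ring
  have h2 : P * z (Fin.natAdd l i) ^ E *
      ((∑ j, (d j : ℂ) * (V (Fin.castAdd m j) * (z (Fin.castAdd m j))⁻¹))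
        + (E : ℂ) * (V (Fin.natAdd l i) * (z (Fin.natAdd l i))⁻¹)) = 0 := by
    rw [key]
    exact h0
  rcases mul_eq_zero.mp h2 with h | h
  · rcases mul_eq_zero.mp h with h' | h'
    · exact absurd h' hPne
    · exact absurd h' hzE
  · exact h

lemma zpow_sum₀ {ι : Type*} (s : Finset ι) (x : ℂ) (hx : x ≠ 0) (f : ι → ℤ) :
    x ^ (∑ i ∈ s, f i) = ∏ i ∈ s, x ^ f i := by
  classical
  induction s using Finset.induction with
  | empty => simp
  | insert _ _ h ih =>
    rw [Finset.sum_insert h, Finset.prod_insert h, zpow_add₀ hx, ih]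

lemma zpow_pow₀ (x : ℂ) (a : ℤ) (b : ℕ) : (x ^ a) ^ b = x ^ (a * b) := by
  rw [← zpow_natCast (x ^ a) b, ← zpow_mul]


/-- let `P : ℂⁿ → ℝ` (`n = l + m`) be a non-constant plurisubharmonic
polynomial without pluriharmonic terms, homogeneous of degree `2k` and of degree
`2d_j > 0` in `(z_j, z̄_j)` for `j = 1,…,l`, with `D = d_1+⋯+d_l < k`.  Then, away from
the coordinate hyperplanes, `P` is pluriharmonic along the level sets of
`G(z) = z_1^{d_1}⋯z_l^{d_l}·(z_{l+1}^{k−D},…,z_n^{k−D})`: for every `z` with all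
coordinates nonzero and every `V` in the kernel of the Jacobian `G'(z)`,
`L(P; z, V) = 0`. -/
theorem stmt14 {l m k : ℕ} (hl : 1 ≤ l) (hm : 1 ≤ m)
    (J : Finset ((Fin (l + m) →₀ ℕ) × (Fin (l + m) →₀ ℕ)))
    (a : (Fin (l + m) →₀ ℕ) × (Fin (l + m) →₀ ℕ) → ℂ)
    (d : Fin l → ℕ) (hd : ∀ j, 0 < d j) (hkD : ∑ j, d j < k)
    (hdeg : ∀ p ∈ J, (∑ i, p.1 i) + (∑ i, p.2 i) = 2 * k)
    (hsep : ∀ p ∈ J, ∀ j : Fin l,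
      p.1 (Fin.castAdd m j) + p.2 (Fin.castAdd m j) = 2 * d j)
    (hnp : ∀ p ∈ J, p.1 ≠ 0 ∧ p.2 ≠ 0)
    (hsym : ∀ p ∈ J, (p.2, p.1) ∈ J)
    (hherm : ∀ p : (Fin (l + m) →₀ ℕ) × (Fin (l + m) →₀ ℕ), a (p.2, p.1) = conj (a p))
    (hpsh : ∀ z V : Fin (l + m) → ℂ, 0 ≤ (leviForm J a z V).re)
    (hnc : ∃ z w : Fin (l + m) → ℂ, pval J a z ≠ pval J a w)
    (G : (Fin (l + m) → ℂ) → (Fin m → ℂ))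
    (hGdef : ∀ z i, G z i =
      (∏ j, z (Fin.castAdd m j) ^ d j) * z (Fin.natAdd l i) ^ (k - ∑ j, d j)) :
    ∀ z : Fin (l + m) → ℂ, (∀ i, z i ≠ 0) →
      ∀ V : Fin (l + m) → ℂ, fderiv ℂ G z V = 0 → leviForm J a z V = 0 := by
  classical
  intro z hz V hker
  set E : ℕ := k - ∑ j, d j with hEdef
  have hE1 : 1 ≤ E := by omega
  have hk1 : 1 ≤ k := by omega
  have hEne : (E : ℂ) ≠ 0 := Nat.cast_ne_zero.2 (by omega)
  have hratio := kernel_ratios k d hd hkD G hGdef z hz V hker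
  set i₀ : Fin m := ⟨0, hm⟩ with hi₀
  set lam : Fin l → ℂ := fun j => V (Fin.castAdd m j) * (z (Fin.castAdd m j))⁻¹ with hlam
  set t : ℂ := V (Fin.natAdd l i₀) * (z (Fin.natAdd l i₀))⁻¹ with htdef
  have hti : ∀ i, V (Fin.natAdd l i) * (z (Fin.natAdd l i))⁻¹ = t := by
    intro i
    have h1 := hratio i
    have h2 := hratio i₀
    have h3 : (E : ℂ) * (V (Fin.natAdd l i) * (z (Fin.natAdd l i))⁻¹) = (E : ℂ) * t := by
      rw [htdef]
      linear_combination h1 - h2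
    exact mul_left_cancel₀ hEne h3
  have hrel : (∑ j, (d j : ℂ) * lam j) + (E : ℂ) * t = 0 := hratio i₀
  have hV1 : ∀ j, V (Fin.castAdd m j) = lam j * z (Fin.castAdd m j) := by
    intro j
    rw [hlam]
    simp only
    rw [mul_assoc, inv_mul_cancel₀ (hz _), mul_one]
  have hV2 : ∀ i, V (Fin.natAdd l i) = t * z (Fin.natAdd l i) := by
    intro i
    rw [← hti i, mul_assoc, inv_mul_cancel₀ (hz _), mul_one]
  -- the weight W γ
  set W : (Fin (l + m) →₀ ℕ) → ℂ := fun γ =>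
    (∑ j, lam j * (γ (Fin.castAdd m j) : ℂ)) + t * ∑ i, (γ (Fin.natAdd l i) : ℂ) with hW
  -- degree bookkeeping, in ℕ
  have hABnat : ∀ p ∈ J,
      (∑ i, p.1 (Fin.natAdd l i)) + (∑ i, p.2 (Fin.natAdd l i)) = 2 * E := by
    intro p hp
    have hd1 := hdeg p hp
    have hs1 : (∑ i, p.1 i) = (∑ j, p.1 (Fin.castAdd m j)) + ∑ i, p.1 (Fin.natAdd l i) :=
      Fin.sum_univ_add _
    have hs2 : (∑ i, p.2 i) = (∑ j, p.2 (Fin.castAdd m j)) + ∑ i, p.2 (Fin.natAdd l i) :=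
      Fin.sum_univ_add _
    have hc : (∑ j, p.1 (Fin.castAdd m j)) + (∑ j, p.2 (Fin.castAdd m j)) = 2 * ∑ j, d j := by
      rw [← Finset.sum_add_distrib, Finset.mul_sum]
      exact Finset.sum_congr rfl fun j _ => hsep p hp j
    omega
  have hw : ∀ p ∈ J, W p.2 = -W p.1 := by
    intro p hp
    have hABc : ((∑ i, (p.1 (Fin.natAdd l i) : ℂ)) + ∑ i, (p.2 (Fin.natAdd l i) : ℂ))
        = 2 * (E : ℂ) := by
      exact_mod_cast hABnat p hp
    have hterm : ∀ j ∈ Finset.univ, lam j * (p.1 (Fin.castAdd m j) : ℂ)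
        + lam j * (p.2 (Fin.castAdd m j) : ℂ) = 2 * ((d j : ℂ) * lam j) := by
      intro j _
      have hc : ((p.1 (Fin.castAdd m j) : ℂ)) + (p.2 (Fin.castAdd m j) : ℂ)
          = 2 * (d j : ℂ) := by
        exact_mod_cast hsep p hp j
      linear_combination lam j * hc
    have hsum : W p.1 + W p.2 = 2 * ((∑ j, (d j : ℂ) * lam j) + (E : ℂ) * t) := by
      rw [hW]
      simp only
      have h1 : ((∑ j, lam j * (p.1 (Fin.castAdd m j) : ℂ))
            + t * ∑ i, (p.1 (Fin.natAdd l i) : ℂ))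
          + ((∑ j, lam j * (p.2 (Fin.castAdd m j) : ℂ))
            + t * ∑ i, (p.2 (Fin.natAdd l i) : ℂ))
          = (∑ j, (lam j * (p.1 (Fin.castAdd m j) : ℂ)
              + lam j * (p.2 (Fin.castAdd m j) : ℂ)))
            + t * ((∑ i, (p.1 (Fin.natAdd l i) : ℂ)) + ∑ i, (p.2 (Fin.natAdd l i) : ℂ)) := by
        rw [Finset.sum_add_distrib]
        ring
      rw [h1, Finset.sum_congr rfl hterm, hABc, ← Finset.mul_sum]
      ring
    have h0 : W p.1 + W p.2 = 0 := by rw [hsum, hrel]; ring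
    linear_combination h0
  -- roots of unity setup
  set N : ℕ := 4 * k * k + 1 with hNdef
  have hN0 : N ≠ 0 := by omega
  set ζ : ℂ := Complex.exp (2 * (Real.pi : ℂ) * Complex.I / N) with hζdef
  have hζprim : IsPrimitiveRoot ζ N := Complex.isPrimitiveRoot_exp N hN0
  have hζ0 : ζ ≠ 0 := Complex.exp_ne_zero _
  have hζconj : conj ζ = ζ⁻¹ := by
    rw [hζdef, ← Complex.exp_conj, ← Complex.exp_neg]
    congr 1
    rw [map_div₀, map_mul, map_mul, Complex.conj_I, Complex.conj_ofReal, map_ofNat,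
      map_natCast]
    ring
  have hzpow_conj : ∀ x : ℤ, conj (ζ ^ x) = ζ ^ (-x) := by
    intro x
    rw [map_zpow₀, hζconj, inv_zpow, ← zpow_neg]
  set u : (Fin l → Fin N) → Fin (l + m) → ℂ := fun s =>
    Fin.addCases (fun j => ζ ^ ((E : ℤ) * ((s j : ℕ) : ℤ)))
      (fun _ => ζ ^ (-(∑ j, (d j : ℤ) * ((s j : ℕ) : ℤ)))) with hu
  have hu1 : ∀ s j, u s (Fin.castAdd m j) = ζ ^ ((E : ℤ) * ((s j : ℕ) : ℤ)) := by
    intro s j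
    rw [hu]
    exact Fin.addCases_left j
  have hu2 : ∀ s i, u s (Fin.natAdd l i) = ζ ^ (-(∑ j, (d j : ℤ) * ((s j : ℕ) : ℤ))) := by
    intro s i
    rw [hu]
    exact Fin.addCases_right i
  have hune : ∀ s i0, u s i0 ≠ 0 := by
    intro s i0
    refine Fin.addCases (motive := fun i0 => u s i0 ≠ 0) (fun j => ?_) (fun i => ?_) i0
    · show u s (Fin.castAdd m j) ≠ 0
      rw [hu1]; exact zpow_ne_zero _ hζ0
    · show u s (Fin.natAdd l i) ≠ 0
      rw [hu2]; exact zpow_ne_zero _ hζ0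
  have hmpow_u : ∀ s γ, mpow (u s) γ =
      ζ ^ ((∑ j, (E : ℤ) * (γ (Fin.castAdd m j) : ℤ) * ((s j : ℕ) : ℤ))
        - (∑ j, (d j : ℤ) * ((s j : ℕ) : ℤ)) * (∑ i, (γ (Fin.natAdd l i) : ℤ))) := by
    intro s γ
    unfold mpow
    rw [Fin.prod_univ_add]
    have hL : (∏ j, u s (Fin.castAdd m j) ^ γ (Fin.castAdd m j))
        = ζ ^ (∑ j, (E : ℤ) * (γ (Fin.castAdd m j) : ℤ) * ((s j : ℕ) : ℤ)) := by
      rw [zpow_sum₀ _ _ hζ0]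
      apply Finset.prod_congr rfl
      intro j _
      rw [hu1, zpow_pow₀]
      congr 1
      ring
    have hR : (∏ i, u s (Fin.natAdd l i) ^ γ (Fin.natAdd l i))
        = ζ ^ (∑ i, (-(∑ j, (d j : ℤ) * ((s j : ℕ) : ℤ))) * (γ (Fin.natAdd l i) : ℤ)) := by
      rw [zpow_sum₀ _ _ hζ0]
      apply Finset.prod_congr rfl
      intro i _
      rw [hu2, zpow_pow₀]
    rw [hL, hR, ← zpow_add₀ hζ0]
    congr 1
    rw [← Finset.mul_sum]
    ring
  set nn : ((Fin (l + m) →₀ ℕ) × (Fin (l + m) →₀ ℕ)) → Fin l → ℤ := fun p j =>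
    (E : ℤ) * ((p.1 (Fin.castAdd m j) : ℤ) - (p.2 (Fin.castAdd m j) : ℤ))
      - (d j : ℤ) * ((∑ i, (p.1 (Fin.natAdd l i) : ℤ)) - ∑ i, (p.2 (Fin.natAdd l i) : ℤ))
    with hnn
  have hphase : ∀ (s : Fin l → Fin N) p, mpow (u s) p.1 * conj (mpow (u s) p.2)
      = ζ ^ (∑ j, nn p j * ((s j : ℕ) : ℤ)) := by
    intro s p
    rw [hmpow_u, hmpow_u, hzpow_conj, ← zpow_add₀ hζ0]
    congr 1
    simp only [hnn]
    rw [Finset.sum_mul, Finset.sum_mul, neg_sub, sub_add, ← Finset.sum_sub_distrib,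
      ← Finset.sum_sub_distrib, ← Finset.sum_sub_distrib]
    apply Finset.sum_congr rfl
    intro j _
    ring
  have hnnzero : ∀ p ∈ J, ∀ j, ζ ^ nn p j = 1 → nn p j = 0 := by
    intro p hp j h1
    have hdvd : (N : ℤ) ∣ nn p j := (hζprim.zpow_eq_one_iff_dvd _).1 h1
    refine Int.eq_zero_of_abs_lt_dvd hdvd ?_
    have hsepj := hsep p hp j
    have hdk : d j ≤ k :=
      le_trans (Finset.single_le_sum (f := d) (fun _ _ => Nat.zero_le _) (Finset.mem_univ j))
        (le_of_lt hkD)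
    have hEk : E ≤ k := by omega
    have hA : (∑ i, p.1 (Fin.natAdd l i)) ≤ 2 * k := by
      have h := hABnat p hp
      omega
    have hB : (∑ i, p.2 (Fin.natAdd l i)) ≤ 2 * k := by
      have h := hABnat p hp
      omega
    have e1 : (E : ℤ) * (p.1 (Fin.castAdd m j) : ℤ) ≤ (k : ℤ) * (2 * k) := by
      have : E * p.1 (Fin.castAdd m j) ≤ k * (2 * k) :=
        Nat.mul_le_mul hEk (by omega)
      exact_mod_cast this
    have e2 : (E : ℤ) * (p.2 (Fin.castAdd m j) : ℤ) ≤ (k : ℤ) * (2 * k) := by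
      have : E * p.2 (Fin.castAdd m j) ≤ k * (2 * k) :=
        Nat.mul_le_mul hEk (by omega)
      exact_mod_cast this
    have e3 : (d j : ℤ) * ((∑ i, (p.1 (Fin.natAdd l i) : ℤ))) ≤ (k : ℤ) * (2 * k) := by
      have h0 : (∑ i, (p.1 (Fin.natAdd l i) : ℤ)) = ((∑ i, p.1 (Fin.natAdd l i) : ℕ) : ℤ) := by
        push_cast
        rfl
      rw [h0]
      have : d j * (∑ i, p.1 (Fin.natAdd l i)) ≤ k * (2 * k) := Nat.mul_le_mul hdk hA
      exact_mod_cast this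
    have e4 : (d j : ℤ) * ((∑ i, (p.2 (Fin.natAdd l i) : ℤ))) ≤ (k : ℤ) * (2 * k) := by
      have h0 : (∑ i, (p.2 (Fin.natAdd l i) : ℤ)) = ((∑ i, p.2 (Fin.natAdd l i) : ℕ) : ℤ) := by
        push_cast
        rfl
      rw [h0]
      have : d j * (∑ i, p.2 (Fin.natAdd l i)) ≤ k * (2 * k) := Nat.mul_le_mul hdk hB
      exact_mod_cast this
    have q1 : (0 : ℤ) ≤ (E : ℤ) * (p.1 (Fin.castAdd m j) : ℤ) := by positivity
    have q2 : (0 : ℤ) ≤ (E : ℤ) * (p.2 (Fin.castAdd m j) : ℤ) := by positivity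
    have q3 : (0 : ℤ) ≤ (d j : ℤ) * ((∑ i, (p.1 (Fin.natAdd l i) : ℤ))) := by
      have : (0:ℤ) ≤ (∑ i, (p.1 (Fin.natAdd l i) : ℤ)) :=
        Finset.sum_nonneg fun i _ => Int.natCast_nonneg _
      positivity
    have q4 : (0 : ℤ) ≤ (d j : ℤ) * ((∑ i, (p.2 (Fin.natAdd l i) : ℤ))) := by
      have : (0:ℤ) ≤ (∑ i, (p.2 (Fin.natAdd l i) : ℤ)) :=
        Finset.sum_nonneg fun i _ => Int.natCast_nonneg _
      positivity
    have hNlt : (k : ℤ) * (2 * k) + (k : ℤ) * (2 * k) < (N : ℤ) := by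
      have : 4 * k * k + 1 = N := hNdef.symm
      push_cast [← this]
      ring_nf
      omega
    rw [abs_lt, hnn]
    simp only
    have hexp : (E : ℤ) * ((p.1 (Fin.castAdd m j) : ℤ) - (p.2 (Fin.castAdd m j) : ℤ))
        - (d j : ℤ) * ((∑ i, (p.1 (Fin.natAdd l i) : ℤ)) - ∑ i, (p.2 (Fin.natAdd l i) : ℤ))
        = ((E : ℤ) * (p.1 (Fin.castAdd m j) : ℤ) - (E : ℤ) * (p.2 (Fin.castAdd m j) : ℤ))
          - ((d j : ℤ) * (∑ i, (p.1 (Fin.natAdd l i) : ℤ))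
            - (d j : ℤ) * (∑ i, (p.2 (Fin.natAdd l i) : ℤ))) := by ring
    rw [hexp]
    constructor
    · linarith [e1, e2, e3, e4, q1, q2, q3, q4, hNlt]
    · linarith [e1, e2, e3, e4, q1, q2, q3, q4, hNlt]
  have hgeom : ∀ c : ℤ, ζ ^ c ≠ 1 → ∑ x : Fin N, (ζ ^ c) ^ (x : ℕ) = 0 := by
    intro c hc
    rw [Fin.sum_univ_eq_sum_range (fun x => (ζ ^ c) ^ x) N, geom_sum_eq hc N]
    have hcN : (ζ ^ c) ^ N = 1 := by
      rw [zpow_pow₀, mul_comm, zpow_mul, zpow_natCast, hζprim.pow_eq_one, one_zpow]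
    rw [hcN]
    simp
  set zs : (Fin l → Fin N) → Fin (l + m) → ℂ := fun s i0 => z i0 * u s i0 with hzs
  set Vs : (Fin l → Fin N) → Fin (l + m) → ℂ := fun s i0 => V i0 * u s i0 with hVs
  have hzsne : ∀ s i0, zs s i0 ≠ 0 := fun s i0 => mul_ne_zero (hz i0) (hune s i0)
  have hform : ∀ s, leviForm J a (zs s) (Vs s)
      = -∑ p ∈ J, (a p * (W p.1 * conj (W p.1)) * (mpow z p.1 * conj (mpow z p.2)))
          * ζ ^ (∑ j, nn p j * ((s j : ℕ) : ℤ)) := by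
    intro s
    rw [levi_kernel_eq J a (zs s) (Vs s) (hzsne s) lam t
      (fun j => by rw [hzs, hVs]; simp only; rw [hV1 j]; ring)
      (fun i => by rw [hzs, hVs]; simp only; rw [hV2 i]; ring)
      (fun p hp => by have h := hw p hp; simp only [hW] at h; exact h)]
    congr 1
    apply Finset.sum_congr rfl
    intro p hp
    have h1 : mpow (zs s) p.1 = mpow z p.1 * mpow (u s) p.1 := by
      simp only [hzs]
      exact mpow_mul z (u s) p.1
    have h2 : mpow (zs s) p.2 = mpow z p.2 * mpow (u s) p.2 := by
      simp only [hzs]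
      exact mpow_mul z (u s) p.2
    rw [h1, h2, map_mul, ← hphase s p]
    simp only [hW]
    ring
  have hsumzero : ∑ s : Fin l → Fin N, leviForm J a (zs s) (Vs s) = 0 := by
    rw [Finset.sum_congr rfl fun s _ => hform s, Finset.sum_neg_distrib, Finset.sum_comm,
      neg_eq_zero]
    apply Finset.sum_eq_zero
    intro p hp
    rw [← Finset.mul_sum]
    have hexp : ∀ s : Fin l → Fin N,
        ζ ^ (∑ j, nn p j * ((s j : ℕ) : ℤ)) = ∏ j, (ζ ^ nn p j) ^ ((s j : ℕ)) := by
      intro s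
      rw [zpow_sum₀ _ _ hζ0]
      exact Finset.prod_congr rfl fun j _ => (zpow_pow₀ ζ (nn p j) (s j)).symm
    rw [Finset.sum_congr rfl fun s _ => hexp s, ← Fintype.piFinset_univ,
      ← Finset.prod_univ_sum (fun _ : Fin l => (Finset.univ : Finset (Fin N)))
        (fun j (v : Fin N) => (ζ ^ nn p j) ^ (v : ℕ))]
    by_cases hall : ∀ j, nn p j = 0
    · -- then W p.1 = 0
      have hEα : ∀ j, (E : ℂ) * (p.1 (Fin.castAdd m j) : ℂ)
          = (d j : ℂ) * ∑ i, (p.1 (Fin.natAdd l i) : ℂ) := by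
        intro j
        have h1 : (((nn p j : ℤ)) : ℂ) = 0 := by
          rw [hall j]
          simp
        simp only [hnn] at h1
        push_cast at h1
        have h2 : ((p.1 (Fin.castAdd m j) : ℂ)) + (p.2 (Fin.castAdd m j) : ℂ)
            = 2 * (d j : ℂ) := by exact_mod_cast hsep p hp j
        have h3 : ((∑ i, (p.1 (Fin.natAdd l i) : ℂ)) + ∑ i, (p.2 (Fin.natAdd l i) : ℂ))
            = 2 * (E : ℂ) := by exact_mod_cast hABnat p hp
        linear_combination ((1 : ℂ)/2) * h1 + ((E : ℂ)/2) * h2 - ((d j : ℂ)/2) * h3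
      have hEW : (E : ℂ) * W p.1
          = ((∑ j, (d j : ℂ) * lam j) + (E : ℂ) * t) * (∑ i, (p.1 (Fin.natAdd l i) : ℂ)) := by
        simp only [hW]
        rw [mul_add, Finset.mul_sum]
        have hterm : ∀ j ∈ Finset.univ, (E : ℂ) * (lam j * (p.1 (Fin.castAdd m j) : ℂ))
            = (d j : ℂ) * lam j * (∑ i, (p.1 (Fin.natAdd l i) : ℂ)) := by
          intro j _
          have := hEα j
          linear_combination lam j * this
        rw [Finset.sum_congr rfl hterm, ← Finset.sum_mul]
        ring
      have hW0 : W p.1 = 0 := by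
        have h0 : (E : ℂ) * W p.1 = 0 := by
          rw [hEW, hrel, zero_mul]
        exact (mul_eq_zero.mp h0).resolve_left hEne
      rw [hW0]
      simp
    · push_neg at hall
      obtain ⟨j0, hj0⟩ := hall
      have hne1 : ζ ^ nn p j0 ≠ 1 := fun h => hj0 (hnnzero p hp j0 h)
      rw [Finset.prod_eq_zero (Finset.mem_univ j0) (hgeom _ hne1)]
      ring
  set s₀ : Fin l → Fin N := fun _ => ⟨0, by omega⟩ with hs₀
  have hre0 : (leviForm J a (zs s₀) (Vs s₀)).re = 0 := by
    have hsumre : ∑ s : Fin l → Fin N, (leviForm J a (zs s) (Vs s)).re = 0 := by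
      rw [← Complex.re_sum, hsumzero]
      simp
    exact (Finset.sum_eq_zero_iff_of_nonneg fun s _ => hpsh (zs s) (Vs s)).1 hsumre s₀
      (Finset.mem_univ _)
  have hu0 : ∀ i0, u s₀ i0 = 1 := by
    intro i0
    refine Fin.addCases (motive := fun i0 => u s₀ i0 = 1) (fun j => ?_) (fun i => ?_) i0
    · show u s₀ (Fin.castAdd m j) = 1
      rw [hu1]
      simp [hs₀]
    · show u s₀ (Fin.natAdd l i) = 1
      rw [hu2]
      simp [hs₀]
  have hzs0 : zs s₀ = z := by
    funext i0
    rw [hzs]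
    simp only
    rw [hu0 i0, mul_one]
  have hVs0 : Vs s₀ = V := by
    funext i0
    rw [hVs]
    simp only
    rw [hu0 i0, mul_one]
  have hre : (leviForm J a z V).re = 0 := by
    rw [← hzs0, ← hVs0]
    exact hre0
  have him : (leviForm J a z V).im = 0 := Complex.conj_eq_iff_im.1 (levi_conj J a hsym hherm z V)
  exact Complex.ext (by simpa using hre) (by simpa using him)
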